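/- The function D : ℝ → ℝ defined by D(t) = Real.exp(-t - t^3/3) is strictly convex on the interval [0, ∞). -/

import Mathlib

theorem stmt_14 :
    StrictConvexOn ℝ (Set.Ici (0 : ℝ)) (fun t : ℝ => Real.exp (-t - t ^ 3 / 3)) := by
  have hd : ∀ x : ℝ, HasDerivAt (fun t : ℝ => Real.exp (-t - t ^ 3 / 3))
      (Real.exp (-x - x ^ 3 / 3) * (-1 - x ^ 2)) x := by
    intro x
    have h1 : HasDerivAt (fun t : ℝ => -t - t ^ 3 / 3) (-1 - x ^ 2) x := by
      have := (hasDerivAt_id x).neg.sub ((hasDerivAt_pow 3 x).div_const 3)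
      exact this.congr_deriv (by push_cast; ring_nf)
    exact h1.exp
  have hderiv : deriv (fun t : ℝ => Real.exp (-t - t ^ 3 / 3)) =
      fun x => Real.exp (-x - x ^ 3 / 3) * (-1 - x ^ 2) := by
    ext x; exact (hd x).deriv
  apply strictConvexOn_of_deriv2_pos (convex_Ici 0)
  · exact (Real.continuous_exp.comp (by continuity)).continuousOn
  · intro x hx
    rw [interior_Ici] at hx
    have hd2 : HasDerivAt (deriv (fun t : ℝ => Real.exp (-t - t ^ 3 / 3)))
        (Real.exp (-x - x ^ 3 / 3) * (-1 - x ^ 2) * (-1 - x ^ 2)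
          + Real.exp (-x - x ^ 3 / 3) * (-(2 * x))) x := by
      rw [hderiv]
      have h2 : HasDerivAt (fun t : ℝ => -1 - t ^ 2) (-(2 * x)) x := by
        have := (hasDerivAt_const x (-1:ℝ)).sub (hasDerivAt_pow 2 x)
        exact this.congr_deriv (by push_cast; ring_nf)
      exact (hd x).mul h2
    rw [show deriv^[2] (fun t : ℝ => Real.exp (-t - t ^ 3 / 3)) x
        = deriv (deriv (fun t : ℝ => Real.exp (-t - t ^ 3 / 3))) x from rfl,
      hd2.deriv]
    have hpos : (0:ℝ) < (-1 - x ^ 2) * (-1 - x ^ 2) - 2 * x := by nlinarith [sq_nonneg (x - 1), sq_nonneg x, sq_nonneg (x^2)]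
    have he := Real.exp_pos (-x - x ^ 3 / 3)
    nlinarith
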